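/- For every integer i ≥ 0 and every v ∈ (1/N, 1) with N > e², one has ∫_{1/N}^1 (log(e²·N·s))^i / (s·√(s+v)) ds ≤ (2^{i+1}/√v) · i! · Σ_{j=0}^{i+1} (log(e²·N·v))^j / (2^j · j!). -/

import Mathlib

open Real Finset

theorem stmt_14 (i : ℕ) (N : ℝ) (hN : Real.exp 2 < N) (v : ℝ) (hv : v ∈ Set.Ioo (1 / N) 1) :
    ∫ s in (1 / N)..1, (Real.log (Real.exp 2 * N * s)) ^ i / (s * Real.sqrt (s + v))
      ≤ (2 ^ (i + 1) / Real.sqrt v) * (Nat.factorial i : ℝ) *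
        ∑ j ∈ Finset.range (i + 2),
          (Real.log (Real.exp 2 * N * v)) ^ j / (2 ^ j * (Nat.factorial j : ℝ)) := by
  obtain ⟨hv1, hv2⟩ := hv
  have hN0 : 0 < N := lt_trans (Real.exp_pos 2) hN
  have ha0 : 0 < 1 / N := by positivity
  have hv0 : 0 < v := lt_trans ha0 hv1
  have hsv0 : 0 < Real.sqrt v := Real.sqrt_pos.mpr hv0
  set c : ℝ := Real.exp 2 * N with hc
  have hc0 : 0 < c := by positivity
  set L : ℝ → ℝ := fun s => Real.log (c * s) with hLdef
  set f : ℝ → ℝ := fun s => L s ^ i / (s * Real.sqrt (s + v)) with hfdef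
  -- basic facts about L
  have hL' : ∀ s : ℝ, 0 < s → HasDerivAt L s⁻¹ s := by
    intro s hs
    have h1 : HasDerivAt (fun t : ℝ => c * t) c s := by simpa using (hasDerivAt_id s).const_mul c
    have h2 := h1.log (by positivity)
    convert h2 using 1
    field_simp
  have hLnn : ∀ s : ℝ, 1 / N ≤ s → 0 ≤ L s := by
    intro s hs
    apply Real.log_nonneg
    have h1 : Real.exp 2 ≤ c * s := by
      have : c * (1 / N) ≤ c * s := by
        apply mul_le_mul_of_nonneg_left hs hc0.le
      calc Real.exp 2 = c * (1 / N) := by field_simp [hc]; exact hc.symm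
        _ ≤ c * s := this
    linarith [Real.one_le_exp (by norm_num : (0:ℝ) ≤ 2)]
  -- continuity of f on positive reals
  have hfc : ∀ s : ℝ, 0 < s → ContinuousAt f s := by
    intro s hs
    apply ContinuousAt.div
    · exact ((Real.continuousAt_log (mul_pos hc0 hs).ne').comp
        (continuousAt_const.mul continuousAt_id)).pow i
    · exact continuousAt_id.mul
        ((Real.continuous_sqrt.continuousAt).comp (continuousAt_id.add continuousAt_const))
    · have : 0 < s + v := by linarith
      positivity
  -- coefficients
  set d : ℕ → ℝ := fun j => 2 ^ i * (Nat.factorial i : ℝ) / (2 ^ j * (Nat.factorial j : ℝ)) with hd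
  have hdnn : ∀ j, 0 ≤ d j := by
    intro j; rw [hd]; positivity
  -- key telescoping identity
  have key : ∀ x : ℝ, (∑ j ∈ Finset.range (i+1), d j * x ^ j)
      - ∑ j ∈ Finset.range (i+1), d j * (2 * j * x ^ (j-1)) = x ^ i := by
    intro x
    have h2 : ∑ j ∈ Finset.range (i+1), d j * (2 * j * x ^ (j-1))
        = ∑ j ∈ Finset.range i, d j * x ^ j := by
      rw [Finset.sum_range_succ']
      simp only [Nat.cast_zero, mul_zero, zero_mul, mul_zero, add_zero]
      apply Finset.sum_congr rfl
      intro j hj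
      have hcoef : d (j+1) * (2 * ((j:ℝ)+1)) = d j := by
        simp only [hd, Nat.factorial_succ, pow_succ]
        push_cast
        have hj1 : (0:ℝ) < (j:ℝ) + 1 := by positivity
        have hjf : (0:ℝ) < (Nat.factorial j : ℝ) := by positivity
        field_simp
      have : j + 1 - 1 = j := by omega
      rw [this]
      push_cast
      calc d (j+1) * (2 * (((j:ℝ)+1)) * x ^ j) = (d (j+1) * (2 * ((j:ℝ)+1))) * x ^ j := by ring
        _ = d j * x ^ j := by rw [hcoef]
    rw [h2, Finset.sum_range_succ]
    have hdi : d i = 1 := by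
      rw [hd]
      field_simp
    rw [hdi]
    ring
  -- antiderivative for piece 1
  have hH : ∀ s : ℝ, 0 < s →
      HasDerivAt (fun t => L t ^ (i+1) / ((i:ℝ)+1)) (L s ^ i / s) s := by
    intro s hs
    have := ((hL' s hs).pow (i+1)).div_const ((i:ℝ)+1)
    refine this.congr_deriv ?_
    have : i + 1 - 1 = i := by omega
    rw [this]
    have hi1 : (0:ℝ) < (i:ℝ) + 1 := by positivity
    field_simp
    push_cast
    ring
  -- antiderivative for piece 2
  set G : ℝ → ℝ := fun t => -2 * (Real.sqrt t)⁻¹ * ∑ j ∈ Finset.range (i+1), d j * L t ^ j with hGdef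
  have hG : ∀ s : ℝ, 0 < s → HasDerivAt G (L s ^ i / (s * Real.sqrt s)) s := by
    intro s hs
    have hss : 0 < Real.sqrt s := Real.sqrt_pos.mpr hs
    have hsq : HasDerivAt (fun t => (Real.sqrt t)⁻¹) (-(1 / (2 * Real.sqrt s)) / s) s := by
      have h := (Real.hasDerivAt_sqrt hs.ne').inv hss.ne'
      refine h.congr_deriv ?_
      rw [Real.sq_sqrt hs.le]
    have hsum : HasDerivAt (fun t => ∑ j ∈ Finset.range (i+1), d j * L t ^ j)
        (∑ j ∈ Finset.range (i+1), d j * ((j:ℝ) * L s ^ (j-1) * s⁻¹)) s :=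
      HasDerivAt.fun_sum fun j _ => ((hL' s hs).pow j).const_mul (d j)
    have hprod := (hsq.const_mul (-2)).mul hsum
    refine hprod.congr_deriv ?_
    set S := ∑ j ∈ Finset.range (i+1), d j * L s ^ j with hS
    have hT : ∑ j ∈ Finset.range (i+1), d j * ((j:ℝ) * L s ^ (j-1) * s⁻¹)
        = (∑ j ∈ Finset.range (i+1), d j * (2 * (j:ℝ) * L s ^ (j-1))) * (2 * s)⁻¹ := by
      rw [Finset.sum_mul]
      apply Finset.sum_congr rfl
      intro j hj
      field_simp
    rw [hT]
    have hkey := key (L s)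
    rw [← hS] at hkey
    have hSk : S = L s ^ i + ∑ j ∈ Finset.range (i+1), d j * (2 * (j:ℝ) * L s ^ (j-1)) := by
      linarith
    rw [hSk]
    field_simp
    ring
  -- integrability lemmas
  have hconta : ∀ (g : ℝ → ℝ), (∀ s : ℝ, 0 < s → ContinuousAt g s) → ∀ p q : ℝ, 0 < p → 0 < q →
      IntervalIntegrable g MeasureTheory.volume p q := by
    intro g hg p q hp hq
    apply ContinuousOn.intervalIntegrable
    intro s hs
    have : 0 < s := lt_of_lt_of_le (lt_min hp hq) (by simpa [Set.uIcc] using hs.1)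
    exact (hg s this).continuousWithinAt
  have hg0c : ∀ s : ℝ, 0 < s → ContinuousAt (fun t => L t ^ i / t) s := by
    intro s hs
    apply ContinuousAt.div
    · exact ((Real.continuousAt_log (mul_pos hc0 hs).ne').comp
        (continuousAt_const.mul continuousAt_id)).pow i
    · exact continuousAt_id
    · exact hs.ne'
  have hg1c : ∀ s : ℝ, 0 < s → ContinuousAt (fun t => (Real.sqrt v)⁻¹ * (L t ^ i / t)) s := by
    intro s hs
    exact continuousAt_const.mul (hg0c s hs)
  have hg2c : ∀ s : ℝ, 0 < s → ContinuousAt (fun t => L t ^ i / (t * Real.sqrt t)) s := by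
    intro s hs
    apply ContinuousAt.div
    · exact ((Real.continuousAt_log (mul_pos hc0 hs).ne').comp
        (continuousAt_const.mul continuousAt_id)).pow i
    · exact continuousAt_id.mul (Real.continuous_sqrt.continuousAt)
    · positivity
  -- split the integral
  have hsplit : ∫ s in (1/N)..1, f s = (∫ s in (1/N)..v, f s) + ∫ s in v..1, f s := by
    rw [intervalIntegral.integral_add_adjacent_intervals
      (hconta f hfc _ _ ha0 hv0) (hconta f hfc _ _ hv0 one_pos)]
  -- piece 1 bound
  have hp1 : (∫ s in (1/N)..v, f s) ≤ (Real.sqrt v)⁻¹ * (L v ^ (i+1) / ((i:ℝ)+1)) := by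
    have hmono : (∫ s in (1/N)..v, f s) ≤ ∫ s in (1/N)..v, (Real.sqrt v)⁻¹ * (L s ^ i / s) := by
      apply intervalIntegral.integral_mono_on hv1.le
        (hconta f hfc _ _ ha0 hv0) (hconta _ hg1c _ _ ha0 hv0)
      intro s hs
      have hs0 : 0 < s := lt_of_lt_of_le ha0 hs.1
      have hsvv : Real.sqrt v ≤ Real.sqrt (s + v) :=
        Real.sqrt_le_sqrt (by linarith)
      have hnum : 0 ≤ L s ^ i := pow_nonneg (hLnn s hs.1) i
      rw [hfdef]
      simp only
      rw [div_le_iff₀ (by positivity), mul_comm ((Real.sqrt v)⁻¹) _, mul_assoc]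
      calc L s ^ i = L s ^ i / s * s := by field_simp
        _ ≤ L s ^ i / s * ((Real.sqrt v)⁻¹ * (s * Real.sqrt (s + v))) := by
            apply mul_le_mul_of_nonneg_left _ (by positivity)
            rw [le_inv_mul_iff₀ hsv0]
            calc Real.sqrt v * s ≤ Real.sqrt (s+v) * s := by
                  apply mul_le_mul_of_nonneg_right hsvv hs0.le
              _ = s * Real.sqrt (s+v) := by ring
    have hFTC : ∫ s in (1/N)..v, (Real.sqrt v)⁻¹ * (L s ^ i / s)
        = (Real.sqrt v)⁻¹ * (L v ^ (i+1) / ((i:ℝ)+1) - L (1/N) ^ (i+1) / ((i:ℝ)+1)) := by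
      rw [intervalIntegral.integral_const_mul]
      congr 1
      apply intervalIntegral.integral_eq_sub_of_hasDerivAt
      · intro x hx
        rw [Set.uIcc_of_le hv1.le] at hx
        exact hH x (lt_of_lt_of_le ha0 hx.1)
      · exact hconta _ hg0c _ _ ha0 hv0
    rw [hFTC] at hmono
    have h2 : 0 ≤ L (1/N) ^ (i+1) / ((i:ℝ)+1) := by
      have := hLnn (1/N) le_rfl
      positivity
    have h3 : 0 ≤ (Real.sqrt v)⁻¹ := by positivity
    nlinarith [mul_le_mul_of_nonneg_left (by linarith : L v ^ (i+1) / ((i:ℝ)+1) - L (1/N) ^ (i+1) / ((i:ℝ)+1) ≤ L v ^ (i+1) / ((i:ℝ)+1)) h3]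
  -- piece 2 bound
  have hp2 : (∫ s in v..1, f s) ≤ 2 * (Real.sqrt v)⁻¹ * ∑ j ∈ Finset.range (i+1), d j * L v ^ j := by
    have hmono : (∫ s in v..1, f s) ≤ ∫ s in v..1, L s ^ i / (s * Real.sqrt s) := by
      apply intervalIntegral.integral_mono_on hv2.le
        (hconta f hfc _ _ hv0 one_pos) (hconta _ hg2c _ _ hv0 one_pos)
      intro s hs
      have hs0 : 0 < s := lt_of_lt_of_le hv0 hs.1
      have hsa : 1/N ≤ s := le_trans hv1.le hs.1
      have hsvv : Real.sqrt s ≤ Real.sqrt (s + v) := Real.sqrt_le_sqrt (by linarith)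
      have hnum : 0 ≤ L s ^ i := pow_nonneg (hLnn s hsa) i
      have hss : 0 < Real.sqrt s := Real.sqrt_pos.mpr hs0
      have hsvp : 0 < Real.sqrt (s + v) := Real.sqrt_pos.mpr (by linarith)
      apply div_le_div_of_nonneg_left hnum (by positivity)
      exact mul_le_mul_of_nonneg_left hsvv hs0.le
    have hFTC : ∫ s in v..1, L s ^ i / (s * Real.sqrt s) = G 1 - G v := by
      apply intervalIntegral.integral_eq_sub_of_hasDerivAt
      · intro x hx
        rw [Set.uIcc_of_le hv2.le] at hx
        exact hG x (lt_of_lt_of_le hv0 hx.1)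
      · exact hconta _ hg2c _ _ hv0 one_pos
    rw [hFTC] at hmono
    have hG1 : G 1 ≤ 0 := by
      rw [hGdef]
      simp only [Real.sqrt_one, inv_one, mul_one]
      have hsumnn : 0 ≤ ∑ j ∈ Finset.range (i+1), d j * L 1 ^ j := by
        apply Finset.sum_nonneg
        intro j _
        exact mul_nonneg (hdnn j) (pow_nonneg (hLnn 1 (by linarith)) j)
      nlinarith
    have hGv : -G v = 2 * (Real.sqrt v)⁻¹ * ∑ j ∈ Finset.range (i+1), d j * L v ^ j := by
      rw [hGdef]; ring
    linarith
  -- combine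
  rw [hsplit]
  have hfinal : (Real.sqrt v)⁻¹ * (L v ^ (i+1) / ((i:ℝ)+1))
      + 2 * (Real.sqrt v)⁻¹ * ∑ j ∈ Finset.range (i+1), d j * L v ^ j
      = (2 ^ (i + 1) / Real.sqrt v) * (Nat.factorial i : ℝ) *
        ∑ j ∈ Finset.range (i + 2),
          (L v) ^ j / (2 ^ j * (Nat.factorial j : ℝ)) := by
    conv_rhs => rw [Finset.sum_range_succ, mul_add]
    have hterm : (2 ^ (i + 1) / Real.sqrt v) * (Nat.factorial i : ℝ) *
        (L v ^ (i+1) / (2 ^ (i+1) * (Nat.factorial (i+1) : ℝ)))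
        = (Real.sqrt v)⁻¹ * (L v ^ (i+1) / ((i:ℝ)+1)) := by
      have hfs : (Nat.factorial (i+1) : ℝ) = ((i:ℝ)+1) * (Nat.factorial i : ℝ) := by
        rw [Nat.factorial_succ]; push_cast; ring
      rw [hfs]
      have h1 : (0:ℝ) < (i:ℝ) + 1 := by positivity
      have h2 : (0:ℝ) < (Nat.factorial i : ℝ) := by positivity
      have h3 : (0:ℝ) < (2:ℝ) ^ (i+1) := by positivity
      field_simp
    have hsum : (2 ^ (i + 1) / Real.sqrt v) * (Nat.factorial i : ℝ) *
        ∑ j ∈ Finset.range (i + 1), (L v) ^ j / (2 ^ j * (Nat.factorial j : ℝ))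
        = 2 * (Real.sqrt v)⁻¹ * ∑ j ∈ Finset.range (i+1), d j * L v ^ j := by
      rw [Finset.mul_sum, Finset.mul_sum]
      apply Finset.sum_congr rfl
      intro j _
      simp only [hd]
      have h2 : (0:ℝ) < (Nat.factorial j : ℝ) := by positivity
      have h3 : (0:ℝ) < (2:ℝ) ^ j := by positivity
      rw [pow_succ]
      field_simp
    rw [hterm, hsum]
    ring
  rw [← hfinal]
  exact add_le_add hp1 hp2
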